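/- Let Γ be a finite right-resolving labeled graph over a finite alphabet X with adjacency matrix A. For the uniform Bernoulli measure μ_u, if the vector (μ_u(B_v))_v is nonzero, it is a right eigenvector of A with eigenvalue |X|, and if (μ_u(F_v))_v is nonzero, it is a left eigenvector of A with eigenvalue |X|. -/

import Mathlib

open MeasureTheory ENNReal

/-- The left-infinite sequence `w = ...x₂x₁` (with `w 0 = x₁` the rightmost letter)
ends at the vertex `v` of the `X`-labeled directed graph with edge relation `E`:
there is a left-infinite path `...e₂e₁` ending at `v` whose `i`-th edge is labeled `xᵢ`. -/
def EndsInf {V X : Type*} (E : V → X → V → Prop) (w : ℕ → X) (v : V) : Prop :=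
  ∃ p : ℕ → V, p 0 = v ∧ ∀ i : ℕ, E (p (i + 1)) (w i) (p i)

/-- The finite word `u = xₙ...x₂x₁` (encoded as the list `[x₁, x₂, ..., xₙ]`, head = rightmost
letter) ends at the vertex `v`: some finite path ending at `v` is labeled by `u`. -/
def EndsFin {V X : Type*} (E : V → X → V → Prop) (u : List X) (v : V) : Prop :=
  ∃ p : ℕ → V, p 0 = v ∧ ∀ (i : ℕ) (h : i < u.length), E (p (i + 1)) (u.get ⟨i, h⟩) (p i)

/-- The right-infinite sequence `w = x₁x₂...` (with `w 0 = x₁` the first letter) starts at the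
vertex `v`: there is a right-infinite path starting at `v` labeled by `w`. -/
def StartsInf {V X : Type*} (E : V → X → V → Prop) (w : ℕ → X) (v : V) : Prop :=
  ∃ p : ℕ → V, p 0 = v ∧ ∀ i : ℕ, E (p i) (w i) (p (i + 1))

/-- The graph is right-resolving: the outgoing edges at each vertex have distinct labels. -/
def RightResolving {V X : Type*} (E : V → X → V → Prop) : Prop :=
  ∀ v x u u', E v x u → E v x u' → u = u'

/-- The cylinder subset of `X^{-ω}` (resp. `X^ω`) of sequences whose last (resp. first)
`u.length` letters spell the word `u`. -/
def Cyl {X : Type*} (u : List X) : Set (ℕ → X) :=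
  {w | ∀ (i : ℕ) (h : i < u.length), w i = u.get ⟨i, h⟩}

set_option linter.unusedSectionVars false

section basic
variable {X : Type*} [Fintype X] [Nonempty X] [MeasurableSpace X]
  (μ : Measure (ℕ → X))
  (hμ : ∀ u : List X, μ (Cyl u) = ((Fintype.card X : ℝ≥0∞))⁻¹ ^ u.length)

omit [Fintype X] [Nonempty X] [MeasurableSpace X] in
lemma mem_cyl_ofFn {n : ℕ} (f : Fin n → X) (w : ℕ → X) :
    w ∈ Cyl (List.ofFn f) ↔ ∀ i : Fin n, w (i : ℕ) = f i := by
  constructor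
  · intro h i
    have := h i (by simp [List.length_ofFn, i.isLt])
    simpa using this
  · intro h i hi
    have hi' : i < n := by simpa using hi
    have := h ⟨i, hi'⟩
    simp only [List.get_ofFn]
    simpa using this

omit [Fintype X] [Nonempty X] [MeasurableSpace X] in
lemma cyl_nil : Cyl ([] : List X) = Set.univ := by
  ext w; simp [Cyl]

include hμ in
lemma measure_univ_eq_one : μ Set.univ = 1 := by
  have := hμ []
  simpa [cyl_nil] using this

omit [Nonempty X] [MeasurableSpace X] in
open scoped Classical in
lemma compl_biUnion_cyl {n : ℕ} (s : Finset (Fin n → X)) :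
    (⋃ f ∈ s, Cyl (List.ofFn f))ᶜ = ⋃ f ∈ sᶜ, Cyl (List.ofFn f) := by
  ext w
  have hpat : ∀ f : Fin n → X, w ∈ Cyl (List.ofFn f) ↔ f = fun i : Fin n => w i := by
    intro f
    rw [mem_cyl_ofFn]
    constructor
    · intro h; funext i; exact (h i).symm
    · intro h i; rw [h]
  simp only [Set.mem_compl_iff, Set.mem_iUnion, Finset.mem_compl, hpat, exists_prop]
  constructor
  · intro h
    exact ⟨fun i => w i, fun hs => h ⟨_, hs, rfl⟩, rfl⟩
  · rintro ⟨f, hf, rfl⟩ ⟨g, hg, rfl⟩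
    exact hf hg

include hμ in
open scoped Classical in
lemma measure_biUnion_cyl {n : ℕ} (s : Finset (Fin n → X)) :
    μ (⋃ f ∈ s, Cyl (List.ofFn f)) = (s.card : ℝ≥0∞) * ((Fintype.card X : ℝ≥0∞))⁻¹ ^ n := by
  have hub : ∀ t : Finset (Fin n → X),
      μ (⋃ f ∈ t, Cyl (List.ofFn f)) ≤ (t.card : ℝ≥0∞) * ((Fintype.card X : ℝ≥0∞))⁻¹ ^ n := by
    intro t
    calc μ (⋃ f ∈ t, Cyl (List.ofFn f)) ≤ ∑ f ∈ t, μ (Cyl (List.ofFn f)) :=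
          measure_biUnion_finset_le t _
      _ = (t.card : ℝ≥0∞) * ((Fintype.card X : ℝ≥0∞))⁻¹ ^ n := by
          simp [hμ, List.length_ofFn, Finset.sum_const, nsmul_eq_mul]
  refine le_antisymm (hub s) ?_
  have hcompl := hub sᶜ
  rw [← compl_biUnion_cyl] at hcompl
  have hone : (1:ℝ≥0∞) ≤ μ (⋃ f ∈ s, Cyl (List.ofFn f)) + μ ((⋃ f ∈ s, Cyl (List.ofFn f))ᶜ) := by
    rw [← measure_univ_eq_one μ hμ, ← Set.union_compl_self (⋃ f ∈ s, Cyl (List.ofFn f))]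
    exact measure_union_le _ _
  have hcards : ((s.card : ℝ≥0∞) + (sᶜ.card : ℝ≥0∞)) * ((Fintype.card X : ℝ≥0∞))⁻¹ ^ n = 1 := by
    have h1 : (s.card : ℕ) + (sᶜ.card : ℕ) = Fintype.card (Fin n → X) := by
      rw [Finset.card_add_card_compl]
    have h2 : (Fintype.card (Fin n → X) : ℝ≥0∞) = (Fintype.card X : ℝ≥0∞) ^ n := by
      simp [Fintype.card_fun]
    rw [← Nat.cast_add, h1, h2, ← mul_pow, ENNReal.mul_inv_cancel, one_pow]
    · exact_mod_cast Fintype.card_ne_zero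
    · exact ENNReal.natCast_ne_top _
  have hfin : (sᶜ.card : ℝ≥0∞) * ((Fintype.card X : ℝ≥0∞))⁻¹ ^ n ≠ ∞ := by
    apply ENNReal.mul_ne_top (ENNReal.natCast_ne_top _)
    apply ENNReal.pow_ne_top
    simp only [ne_eq, ENNReal.inv_eq_top]
    exact_mod_cast Fintype.card_ne_zero
  have hkey : (s.card : ℝ≥0∞) * ((Fintype.card X : ℝ≥0∞))⁻¹ ^ n
      + (sᶜ.card : ℝ≥0∞) * ((Fintype.card X : ℝ≥0∞))⁻¹ ^ n
      ≤ μ (⋃ f ∈ s, Cyl (List.ofFn f)) + (sᶜ.card : ℝ≥0∞) * ((Fintype.card X : ℝ≥0∞))⁻¹ ^ n := by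
    rw [← add_mul, hcards]
    exact le_trans hone (add_le_add_right hcompl _)
  exact (ENNReal.add_le_add_iff_right hfin).mp hkey

include hμ in
open scoped Classical in
lemma measure_iInter_biUnion_cyl (T : (n : ℕ) → Finset (Fin n → X))
    (hT : ∀ n, (⋃ f ∈ T (n+1), Cyl (List.ofFn f)) ⊆ ⋃ f ∈ T n, Cyl (List.ofFn f)) :
    μ (⋂ n, ⋃ f ∈ T n, Cyl (List.ofFn f))
      = ⨅ n, ((T n).card : ℝ≥0∞) * ((Fintype.card X : ℝ≥0∞))⁻¹ ^ n := by
  set U : ℕ → Set (ℕ → X) := fun n => ⋃ f ∈ T n, Cyl (List.ofFn f) with hU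
  have hmU : ∀ n, μ (U n) = ((T n).card : ℝ≥0∞) * ((Fintype.card X : ℝ≥0∞))⁻¹ ^ n :=
    fun n => measure_biUnion_cyl μ hμ (T n)
  have hanti : Antitone U := antitone_nat_of_succ_le hT
  refine le_antisymm (le_iInf fun n => by
    rw [← hmU n]; exact measure_mono (Set.iInter_subset U n)) ?_
  have hcomplm : ∀ n, μ (U n) + μ ((U n)ᶜ) = 1 := by
    intro n
    have hc : (U n)ᶜ = ⋃ f ∈ (T n)ᶜ, Cyl (List.ofFn f) := compl_biUnion_cyl (T n)
    rw [hmU n, hc, measure_biUnion_cyl μ hμ]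
    rw [← add_mul, ← Nat.cast_add, Finset.card_add_card_compl]
    rw [show (Fintype.card (Fin n → X) : ℝ≥0∞) = (Fintype.card X : ℝ≥0∞) ^ n by
      simp [Fintype.card_fun]]
    rw [← mul_pow, ENNReal.mul_inv_cancel, one_pow]
    · exact_mod_cast Fintype.card_ne_zero
    · exact ENNReal.natCast_ne_top _
  have hcc : (⋂ n, U n)ᶜ = ⋃ n, (U n)ᶜ := by simp [Set.compl_iInter]
  have hmono : Monotone (fun n => (U n)ᶜ) := fun a b hab => Set.compl_subset_compl.mpr (hanti hab)
  have hsup : μ ((⋂ n, U n)ᶜ) = ⨆ n, μ ((U n)ᶜ) := by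
    rw [hcc]; exact Monotone.measure_iUnion hmono
  have hgoal : 1 - ⨆ n, μ ((U n)ᶜ) ≤ μ (⋂ n, U n) := by
    rw [tsub_le_iff_right]
    calc (1:ℝ≥0∞) ≤ μ (⋂ n, U n) + μ ((⋂ n, U n)ᶜ) := by
          rw [← measure_univ_eq_one μ hμ, ← Set.union_compl_self (⋂ n, U n)]
          exact measure_union_le _ _
      _ = μ (⋂ n, U n) + ⨆ n, μ ((U n)ᶜ) := by rw [hsup]
  refine le_trans ?_ hgoal
  rw [ENNReal.sub_iSup (by norm_num)]
  refine le_iInf fun n => le_trans (iInf_le _ n) ?_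
  rw [← hmU n]
  have hadd := hcomplm n
  have hc1 : μ ((U n)ᶜ) ≠ ∞ := by
    intro h; rw [h] at hadd; simp at hadd
  rw [ENNReal.eq_sub_of_add_eq hc1 hadd]

end basic

/-- nondependent cons -/
def cns {X : Type*} {n : ℕ} (x : X) (g : Fin n → X) : Fin (n + 1) → X := Fin.cons x g

lemma cns_injective {X : Type*} {n : ℕ} (x : X) : Function.Injective (cns (n := n) x) :=
  Fin.cons_right_injective (α := fun _ : Fin (n + 1) => X) x

@[simp] lemma cns_zero {X : Type*} {n : ℕ} (x : X) (g : Fin n → X) : cns x g 0 = x :=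
  Fin.cons_zero (α := fun _ : Fin (n + 1) => X) x g

lemma cns_self_tail {X : Type*} {n : ℕ} (f : Fin (n + 1) → X) : cns (f 0) (Fin.tail f) = f :=
  Fin.cons_self_tail (α := fun _ : Fin (n + 1) => X) f

@[simp] lemma cns_succ {X : Type*} {n : ℕ} (x : X) (g : Fin n → X) (i : Fin n) :
    cns x g i.succ = g i := Fin.cons_succ (α := fun _ : Fin (n + 1) => X) x g i

section graph
variable {V X : Type*}

/-- finite admissible word (start side) -/
def SFpath (E : V → X → V → Prop) {n : ℕ} (f : Fin n → X) (v : V) : Prop :=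
  ∃ p : ℕ → V, p 0 = v ∧ ∀ i : Fin n, E (p i) (f i) (p (i + 1))

/-- finite admissible word (end side) -/
def EFpath (E : V → X → V → Prop) {n : ℕ} (f : Fin n → X) (v : V) : Prop :=
  ∃ p : ℕ → V, p 0 = v ∧ ∀ i : Fin n, E (p (i + 1)) (f i) (p i)

noncomputable def sfin (E : V → X → V → Prop) [Fintype X] (n : ℕ) (v : V) :
    Finset (Fin n → X) :=
  (Set.toFinite {f : Fin n → X | SFpath E f v}).toFinset

noncomputable def efin (E : V → X → V → Prop) [Fintype X] (n : ℕ) (v : V) :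
    Finset (Fin n → X) :=
  (Set.toFinite {f : Fin n → X | EFpath E f v}).toFinset

lemma mem_sfin {E : V → X → V → Prop} [Fintype X] {n : ℕ} {f : Fin n → X} {v : V} :
    f ∈ sfin E n v ↔ SFpath E f v := by simp [sfin]

lemma mem_efin {E : V → X → V → Prop} [Fintype X] {n : ℕ} {f : Fin n → X} {v : V} :
    f ∈ efin E n v ↔ EFpath E f v := by simp [efin]

/-- uniqueness of paths in a right-resolving graph -/
lemma path_unique {E : V → X → V → Prop} (hrr : RightResolving E) (w : ℕ → X)
    (p q : ℕ → V) (h0 : p 0 = q 0) {n : ℕ}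
    (hp : ∀ i < n, E (p i) (w i) (p (i + 1)))
    (hq : ∀ i < n, E (q i) (w i) (q (i + 1))) :
    ∀ i ≤ n, p i = q i := by
  intro i
  induction i with
  | zero => exact fun _ => h0
  | succ k ih =>
    intro hk
    have hkn : k < n := Nat.lt_of_succ_le hk
    have hpk := hp k hkn
    rw [ih (Nat.le_of_lt hkn)] at hpk
    exact hrr _ _ _ _ hpk (hq k hkn)

/-- König's lemma for labeled paths ending at a vertex -/
lemma koenig [Finite V] {E : V → X → V → Prop} (w : ℕ → X) (u : V)
    (h : ∀ n : ℕ, ∃ p : ℕ → V, p 0 = u ∧ ∀ i < n, E (p (i + 1)) (w i) (p i)) :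
    ∃ p : ℕ → V, p 0 = u ∧ ∀ i : ℕ, E (p (i + 1)) (w i) (p i) := by
  classical
  set I : ℕ → (ℕ → V) → Prop := fun n q =>
    ∀ m : ℕ, ∃ p : ℕ → V, p 0 = u ∧ (∀ i < m, E (p (i + 1)) (w i) (p i)) ∧
      ∀ i ≤ n, p i = q i with hI
  have hbase : I 0 (fun _ => u) := by
    intro m
    obtain ⟨p, hp0, hpe⟩ := h m
    exact ⟨p, hp0, hpe, fun i hi => by rw [Nat.le_zero.mp hi, hp0]⟩
  have step : ∀ n (q : ℕ → V), I n q →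
      ∃ q' : ℕ → V, (∀ i ≤ n, q' i = q i) ∧ I (n + 1) q' := by
    intro n q hq
    choose P hP0 hPe hPa using hq
    obtain ⟨v, hv⟩ := Finite.exists_infinite_fiber (fun m => P m (n + 1))
    rw [Set.infinite_coe_iff] at hv
    refine ⟨fun i => if i ≤ n then q i else v, fun i hi => if_pos hi, ?_⟩
    intro m
    obtain ⟨m', hm'mem, hm'⟩ := hv.exists_gt m
    refine ⟨P m', hP0 m', fun i hi => hPe m' i (hi.trans hm'), ?_⟩
    intro i hi
    by_cases hcase : i ≤ n
    · simp only [if_pos hcase]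
      exact hPa m' i hcase
    · have hieq : i = n + 1 := by omega
      subst hieq
      simp only [if_neg hcase]
      exact hm'mem
  choose qd hagree hstep using step
  let F : ∀ n : ℕ, {q : ℕ → V // I n q} := fun n =>
    Nat.rec ⟨fun _ => u, hbase⟩ (fun k ih => ⟨qd k ih.1 ih.2, hstep k ih.1 ih.2⟩) n
  have hFsucc : ∀ n, ∀ i ≤ n, (F (n + 1)).1 i = (F n).1 i := fun n =>
    hagree n (F n).1 (F n).2
  have hcoh : ∀ i n n', i ≤ n → n ≤ n' → (F n').1 i = (F n).1 i := by
    intro i n n' hin hnn'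
    induction n' , hnn' using Nat.le_induction with
    | base => rfl
    | succ k hk ih => rw [hFsucc k i (hin.trans hk), ih]
  refine ⟨fun i => (F i).1 i, ?_, ?_⟩
  · rfl
  · intro i
    obtain ⟨p, hp0, hpe, hpa⟩ := (F (i + 1)).2 (i + 1)
    have h1 : p (i + 1) = (F (i + 1)).1 (i + 1) := hpa (i + 1) le_rfl
    have h2 : p i = (F i).1 i := by
      rw [hpa i (Nat.le_succ i), hcoh i i (i + 1) le_rfl (Nat.le_succ i)]
    show E ((F (i + 1)).1 (i + 1)) (w i) ((F i).1 i)
    rw [← h1, ← h2]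
    exact hpe i (Nat.lt_succ_self i)

variable [Fintype X] [Fintype V]

lemma sfin_trunc {E : V → X → V → Prop} {n : ℕ} {f : Fin (n + 1) → X} {v : V}
    (hf : f ∈ sfin E (n + 1) v) : (f ∘ Fin.castSucc) ∈ sfin E n v := by
  rw [mem_sfin] at hf ⊢
  obtain ⟨p, hp0, hpe⟩ := hf
  exact ⟨p, hp0, fun i => by simpa using hpe i.castSucc⟩

lemma efin_trunc {E : V → X → V → Prop} {n : ℕ} {f : Fin (n + 1) → X} {v : V}
    (hf : f ∈ efin E (n + 1) v) : (f ∘ Fin.castSucc) ∈ efin E n v := by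
  rw [mem_efin] at hf ⊢
  obtain ⟨p, hp0, hpe⟩ := hf
  exact ⟨p, hp0, fun i => by simpa using hpe i.castSucc⟩

lemma sfin_card_le_succ {E : V → X → V → Prop} {n : ℕ} {v : V} :
    (sfin E (n + 1) v).card ≤ (sfin E n v).card * Fintype.card X := by
  classical
  have : (sfin E (n + 1) v).card ≤ ((sfin E n v) ×ˢ (Finset.univ : Finset X)).card := by
    apply Finset.card_le_card_of_injOn (fun f => (f ∘ Fin.castSucc, f (Fin.last n)))
    · intro f hf
      exact Finset.mem_product.mpr ⟨sfin_trunc hf, Finset.mem_univ _⟩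
    · intro f _ g _ hfg
      simp only [Prod.mk.injEq] at hfg
      funext i
      induction i using Fin.lastCases with
      | last => exact hfg.2
      | cast j => exact congrFun hfg.1 j
  simpa [Finset.card_product] using this

lemma efin_card_le_succ {E : V → X → V → Prop} {n : ℕ} {v : V} :
    (efin E (n + 1) v).card ≤ (efin E n v).card * Fintype.card X := by
  classical
  have : (efin E (n + 1) v).card ≤ ((efin E n v) ×ˢ (Finset.univ : Finset X)).card := by
    apply Finset.card_le_card_of_injOn (fun f => (f ∘ Fin.castSucc, f (Fin.last n)))
    · intro f hf
      exact Finset.mem_product.mpr ⟨efin_trunc hf, Finset.mem_univ _⟩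
    · intro f _ g _ hfg
      simp only [Prod.mk.injEq] at hfg
      funext i
      induction i using Fin.lastCases with
      | last => exact hfg.2
      | cast j => exact congrFun hfg.1 j
  simpa [Finset.card_product] using this

lemma ncard_eq_filter_card {E : V → X → V → Prop} (v u : V) [DecidablePred (fun x => E v x u)] :
    {x : X | E v x u}.ncard = (Finset.univ.filter (fun x => E v x u)).card := by
  rw [Set.ncard_eq_toFinset_card']
  congr 1
  ext x
  simp

lemma sfin_succ_card {E : V → X → V → Prop} (hrr : RightResolving E) (n : ℕ) (v : V) :
    (sfin E (n + 1) v).card = ∑ u : V, {x : X | E v x u}.ncard * (sfin E n u).card := by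
  classical
  set Q : Finset (X × V) := Finset.univ.filter (fun p => E v p.1 p.2) with hQ
  have hrepr : sfin E (n + 1) v = Q.biUnion (fun p => (sfin E n p.2).image (cns p.1)) := by
    ext f
    simp only [Finset.mem_biUnion, Finset.mem_image, hQ, Finset.mem_filter,
      Finset.mem_univ, true_and, mem_sfin]
    constructor
    · rintro ⟨p, hp0, hpe⟩
      refine ⟨(f 0, p 1), ?_, Fin.tail f, ⟨fun i => p (i + 1), rfl, fun i => ?_⟩,
        cns_self_tail f⟩
      · have := hpe 0
        simpa [hp0] using this
      · have := hpe i.succ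
        simpa [Fin.tail, Fin.val_succ] using this
    · rintro ⟨⟨x, u⟩, hE, g, ⟨q, hq0, hqe⟩, rfl⟩
      refine ⟨fun i => Nat.casesOn i v q, rfl, fun i => ?_⟩
      induction i using Fin.cases with
      | zero => simpa [hq0] using hE
      | succ j => simpa [Fin.val_succ] using hqe j
  rw [hrepr, Finset.card_biUnion]
  · have him : ∀ p ∈ Q, ((sfin E n p.2).image (cns p.1)).card = (sfin E n p.2).card :=
      fun p _ => Finset.card_image_of_injective _ (cns_injective p.1)
    rw [Finset.sum_congr rfl him, hQ]
    rw [Finset.sum_filter]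
    rw [Fintype.sum_prod_type_right]
    congr 1
    funext u
    rw [ncard_eq_filter_card, Finset.card_filter, Finset.sum_mul]
    congr 1
    funext x
    by_cases hE : E v x u <;> simp [hE]
  · rintro ⟨x, u⟩ hxu ⟨x', u'⟩ hx'u' hne
    simp only [hQ, Finset.mem_filter, Finset.mem_univ, true_and, Finset.mem_coe] at hxu hx'u'
    rw [Function.onFun, Finset.disjoint_left]
    rintro f hf hf'
    obtain ⟨g, _, rfl⟩ := Finset.mem_image.mp hf
    obtain ⟨g', _, heq⟩ := Finset.mem_image.mp hf'
    have hx : x' = x := by simpa using congrFun heq 0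
    have hu : u' = u := hrr v x u' u (hx ▸ hx'u') hxu
    exact hne (by rw [hx, hu])

lemma efin_succ_card_le {E : V → X → V → Prop} (n : ℕ) (u : V) :
    (efin E (n + 1) u).card ≤ ∑ v : V, {x : X | E v x u}.ncard * (efin E n v).card := by
  classical
  set Q : Finset (X × V) := Finset.univ.filter (fun p => E p.2 p.1 u) with hQ
  have hsub : efin E (n + 1) u ⊆ Q.biUnion (fun p => (efin E n p.2).image (cns p.1)) := by
    intro f hf
    rw [mem_efin] at hf
    obtain ⟨p, hp0, hpe⟩ := hf
    simp only [Finset.mem_biUnion, Finset.mem_image, hQ, Finset.mem_filter,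
      Finset.mem_univ, true_and]
    refine ⟨(f 0, p 1), ?_, Fin.tail f, mem_efin.mpr ⟨fun i => p (i + 1), rfl, fun i => ?_⟩,
      cns_self_tail f⟩
    · have := hpe 0
      simpa [hp0] using this
    · have := hpe i.succ
      simpa [Fin.tail, Fin.val_succ] using this
  calc (efin E (n + 1) u).card ≤ (Q.biUnion (fun p => (efin E n p.2).image (cns p.1))).card :=
        Finset.card_le_card hsub
    _ ≤ ∑ p ∈ Q, ((efin E n p.2).image (cns p.1)).card := Finset.card_biUnion_le
    _ ≤ ∑ p ∈ Q, (efin E n p.2).card :=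
        Finset.sum_le_sum fun p _ => Finset.card_image_le
    _ = ∑ v : V, {x : X | E v x u}.ncard * (efin E n v).card := by
        rw [hQ, Finset.sum_filter, Fintype.sum_prod_type_right]
        congr 1
        funext v
        rw [ncard_eq_filter_card, Finset.card_filter, Finset.sum_mul]
        congr 1
        funext x
        by_cases hE : E v x u <;> simp [hE]

lemma outdeg_le {E : V → X → V → Prop} (hrr : RightResolving E) (v : V) :
    ∑ u : V, {x : X | E v x u}.ncard ≤ Fintype.card X := by
  classical
  have hd : ∑ u : V, (Finset.univ.filter (fun x => E v x u)).card
      = (Finset.univ.biUnion (fun u : V => Finset.univ.filter (fun x => E v x u))).card := by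
    rw [Finset.card_biUnion]
    intro u _ u' _ hne
    rw [Function.onFun, Finset.disjoint_left]
    intro x hx hx'
    simp only [Finset.mem_filter, Finset.mem_univ, true_and] at hx hx'
    exact hne (hrr v x u u' hx hx')
  calc ∑ u : V, {x : X | E v x u}.ncard = ∑ u : V, (Finset.univ.filter (fun x => E v x u)).card :=
        Finset.sum_congr rfl fun u _ => ncard_eq_filter_card v u
    _ = _ := hd
    _ ≤ Fintype.card X := Finset.card_le_card (Finset.subset_univ _) |>.trans le_rfl

end graph

section main
variable {V X : Type*} [Fintype V] [Fintype X] [Nonempty X] [MeasurableSpace X]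
  {E : V → X → V → Prop}
  (μ : Measure (ℕ → X))
  (hμ : ∀ u : List X, μ (Cyl u) = ((Fintype.card X : ℝ≥0∞))⁻¹ ^ u.length)

lemma startsInf_eq_iInter (hrr : RightResolving E) (v : V) :
    {w : ℕ → X | StartsInf E w v} = ⋂ n, ⋃ f ∈ sfin E n v, Cyl (List.ofFn f) := by
  ext w
  constructor
  · rintro ⟨p, hp0, hpe⟩
    refine Set.mem_iInter.mpr fun n => Set.mem_iUnion₂.mpr ⟨fun i : Fin n => w i, ?_, ?_⟩
    · exact mem_sfin.mpr ⟨p, hp0, fun i => hpe i⟩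
    · exact (mem_cyl_ofFn _ w).mpr fun i => rfl
  · intro hw
    have hn : ∀ n : ℕ, ∃ p : ℕ → V, p 0 = v ∧ ∀ i < n, E (p i) (w i) (p (i + 1)) := by
      intro n
      obtain ⟨f, hf, hwf⟩ := Set.mem_iUnion₂.mp (Set.mem_iInter.mp hw n)
      obtain ⟨p, hp0, hpe⟩ := mem_sfin.mp hf
      refine ⟨p, hp0, fun i hi => ?_⟩
      have hcongr : w i = f ⟨i, hi⟩ := (mem_cyl_ofFn f w).mp hwf ⟨i, hi⟩
      rw [hcongr]
      exact hpe ⟨i, hi⟩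
    choose P hP0 hPe using hn
    refine ⟨fun i => P (i + 1) i, hP0 1, fun i => ?_⟩
    have hagree := path_unique hrr w (P (i + 2)) (P (i + 1))
      (by rw [hP0, hP0]) (n := i + 1)
      (fun j hj => hPe (i + 2) j (by omega)) (fun j hj => hPe (i + 1) j hj)
    show E (P (i + 1) i) (w i) (P (i + 2) (i + 1))
    rw [← hagree i (by omega)]
    exact hPe (i + 2) i (by omega)

lemma endsInf_eq_iInter (u : V) :
    {w : ℕ → X | EndsInf E w u} = ⋂ n, ⋃ f ∈ efin E n u, Cyl (List.ofFn f) := by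
  ext w
  constructor
  · rintro ⟨p, hp0, hpe⟩
    refine Set.mem_iInter.mpr fun n => Set.mem_iUnion₂.mpr ⟨fun i : Fin n => w i, ?_, ?_⟩
    · exact mem_efin.mpr ⟨p, hp0, fun i => hpe i⟩
    · exact (mem_cyl_ofFn _ w).mpr fun i => rfl
  · intro hw
    have hn : ∀ n : ℕ, ∃ p : ℕ → V, p 0 = u ∧ ∀ i < n, E (p (i + 1)) (w i) (p i) := by
      intro n
      obtain ⟨f, hf, hwf⟩ := Set.mem_iUnion₂.mp (Set.mem_iInter.mp hw n)
      obtain ⟨p, hp0, hpe⟩ := mem_efin.mp hf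
      refine ⟨p, hp0, fun i hi => ?_⟩
      have hcongr : w i = f ⟨i, hi⟩ := (mem_cyl_ofFn f w).mp hwf ⟨i, hi⟩
      rw [hcongr]
      exact hpe ⟨i, hi⟩
    exact koenig w u hn

include hμ in
lemma measure_startsInf (hrr : RightResolving E) (v : V) :
    μ {w | StartsInf E w v}
      = ⨅ n, ((sfin E n v).card : ℝ≥0∞) * ((Fintype.card X : ℝ≥0∞))⁻¹ ^ n := by
  rw [startsInf_eq_iInter hrr v]
  refine measure_iInter_biUnion_cyl μ hμ _ fun n => ?_
  intro w hw
  obtain ⟨f, hf, hwf⟩ := Set.mem_iUnion₂.mp hw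
  refine Set.mem_biUnion (sfin_trunc hf) ?_
  rw [mem_cyl_ofFn] at hwf ⊢
  intro i
  simpa using hwf i.castSucc

include hμ in
lemma measure_endsInf (u : V) :
    μ {w | EndsInf E w u}
      = ⨅ n, ((efin E n u).card : ℝ≥0∞) * ((Fintype.card X : ℝ≥0∞))⁻¹ ^ n := by
  rw [endsInf_eq_iInter u]
  refine measure_iInter_biUnion_cyl μ hμ _ fun n => ?_
  intro w hw
  obtain ⟨f, hf, hwf⟩ := Set.mem_iUnion₂.mp hw
  refine Set.mem_biUnion (efin_trunc hf) ?_
  rw [mem_cyl_ofFn] at hwf ⊢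
  intro i
  simpa using hwf i.castSucc

end main

section eigen
variable {V X : Type*} [Fintype V] [Fintype X] [Nonempty X] [MeasurableSpace X]
  {E : V → X → V → Prop}
  (μ : Measure (ℕ → X))
  (hμ : ∀ u : List X, μ (Cyl u) = ((Fintype.card X : ℝ≥0∞))⁻¹ ^ u.length)

private lemma kappa_ne_zero : ((Fintype.card X : ℝ≥0∞)) ≠ 0 :=
  Nat.cast_ne_zero.mpr Fintype.card_ne_zero

private lemma mulCancel {c : ℝ≥0∞} {n : ℕ} :
    (c * (Fintype.card X : ℝ≥0∞)) * ((Fintype.card X : ℝ≥0∞))⁻¹ ^ (n + 1)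
      = c * ((Fintype.card X : ℝ≥0∞))⁻¹ ^ n := by
  rw [pow_succ, show (c * (Fintype.card X : ℝ≥0∞)) *
      (((Fintype.card X : ℝ≥0∞))⁻¹ ^ n * ((Fintype.card X : ℝ≥0∞))⁻¹)
      = c * ((Fintype.card X : ℝ≥0∞))⁻¹ ^ n
        * ((Fintype.card X : ℝ≥0∞) * ((Fintype.card X : ℝ≥0∞))⁻¹) by ring,
    ENNReal.mul_inv_cancel kappa_ne_zero (ENNReal.natCast_ne_top _), mul_one]

private lemma dS_antitone (v : V) :
    Antitone (fun n => ((sfin E n v).card : ℝ≥0∞) * ((Fintype.card X : ℝ≥0∞))⁻¹ ^ n) := by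
  apply antitone_nat_of_succ_le
  intro n
  calc ((sfin E (n + 1) v).card : ℝ≥0∞) * ((Fintype.card X : ℝ≥0∞))⁻¹ ^ (n + 1)
      ≤ (((sfin E n v).card * Fintype.card X : ℕ) : ℝ≥0∞) * ((Fintype.card X : ℝ≥0∞))⁻¹ ^ (n + 1) :=
        mul_le_mul_left (Nat.cast_le.mpr sfin_card_le_succ) _
    _ = ((sfin E n v).card : ℝ≥0∞) * ((Fintype.card X : ℝ≥0∞))⁻¹ ^ n := by
        rw [Nat.cast_mul]; exact mulCancel

private lemma dE_antitone (v : V) :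
    Antitone (fun n => ((efin E n v).card : ℝ≥0∞) * ((Fintype.card X : ℝ≥0∞))⁻¹ ^ n) := by
  apply antitone_nat_of_succ_le
  intro n
  calc ((efin E (n + 1) v).card : ℝ≥0∞) * ((Fintype.card X : ℝ≥0∞))⁻¹ ^ (n + 1)
      ≤ (((efin E n v).card * Fintype.card X : ℕ) : ℝ≥0∞) * ((Fintype.card X : ℝ≥0∞))⁻¹ ^ (n + 1) :=
        mul_le_mul_left (Nat.cast_le.mpr efin_card_le_succ) _
    _ = ((efin E n v).card : ℝ≥0∞) * ((Fintype.card X : ℝ≥0∞))⁻¹ ^ n := by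
        rw [Nat.cast_mul]; exact mulCancel

private lemma iInf_shift {d : ℕ → ℝ≥0∞} (hd : Antitone d) : ⨅ n, d n = ⨅ n, d (n + 1) :=
  le_antisymm (le_iInf fun n => iInf_le _ (n + 1))
    (le_iInf fun n => iInf_le_of_le n (hd (Nat.le_succ n)))

private lemma iInf_finsum {g : ℕ → V → ℝ≥0∞} (hg : ∀ u, Antitone fun n => g n u) :
    ⨅ n, ∑ u : V, g n u = ∑ u : V, ⨅ n, g n u :=
  ENNReal.iInf_sum fun _ i j =>
    ⟨max i j, fun u _ => ⟨hg u (le_max_left i j), hg u (le_max_right i j)⟩⟩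

include hμ in
lemma B_eigen (hrr : RightResolving E) (v : V) :
    (Fintype.card X : ℝ≥0∞) * μ {w | StartsInf E w v} =
      ∑ u : V, ({x : X | E v x u}.ncard : ℝ≥0∞) * μ {w | StartsInf E w u} := by
  have hμB : ∀ v : V, μ {w | StartsInf E w v}
      = ⨅ n, ((sfin E n v).card : ℝ≥0∞) * ((Fintype.card X : ℝ≥0∞))⁻¹ ^ n :=
    measure_startsInf μ hμ hrr
  have hrec : ∀ n, (Fintype.card X : ℝ≥0∞)
      * (((sfin E (n + 1) v).card : ℝ≥0∞) * ((Fintype.card X : ℝ≥0∞))⁻¹ ^ (n + 1))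
      = ∑ u : V, ({x : X | E v x u}.ncard : ℝ≥0∞)
          * (((sfin E n u).card : ℝ≥0∞) * ((Fintype.card X : ℝ≥0∞))⁻¹ ^ n) := by
    intro n
    rw [← mul_assoc, mul_comm (Fintype.card X : ℝ≥0∞) _, mulCancel, sfin_succ_card hrr n v,
      Nat.cast_sum, Finset.sum_mul]
    refine Finset.sum_congr rfl fun u _ => ?_
    rw [Nat.cast_mul, mul_assoc]
  rw [hμB v, iInf_shift (dS_antitone v),
    ENNReal.mul_iInf_of_ne kappa_ne_zero (ENNReal.natCast_ne_top _)]
  calc (⨅ n, (Fintype.card X : ℝ≥0∞)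
        * (((sfin E (n + 1) v).card : ℝ≥0∞) * ((Fintype.card X : ℝ≥0∞))⁻¹ ^ (n + 1)))
      = ⨅ n, ∑ u : V, ({x : X | E v x u}.ncard : ℝ≥0∞)
          * (((sfin E n u).card : ℝ≥0∞) * ((Fintype.card X : ℝ≥0∞))⁻¹ ^ n) := iInf_congr hrec
    _ = ∑ u : V, ⨅ n, ({x : X | E v x u}.ncard : ℝ≥0∞)
          * (((sfin E n u).card : ℝ≥0∞) * ((Fintype.card X : ℝ≥0∞))⁻¹ ^ n) :=
        iInf_finsum fun u => fun a b hab => mul_le_mul_right (dS_antitone u hab) _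
    _ = ∑ u : V, ({x : X | E v x u}.ncard : ℝ≥0∞) * μ {w | StartsInf E w u} := by
        refine Finset.sum_congr rfl fun u _ => ?_
        rw [hμB u, ENNReal.mul_iInf (fun h => absurd h (ENNReal.natCast_ne_top _))]

include hμ in
lemma F_eigen (hrr : RightResolving E) (u : V) :
    (Fintype.card X : ℝ≥0∞) * μ {w | EndsInf E w u} =
      ∑ v : V, ({x : X | E v x u}.ncard : ℝ≥0∞) * μ {w | EndsInf E w v} := by
  have hμE : ∀ v : V, μ {w | EndsInf E w v}
      = ⨅ n, ((efin E n v).card : ℝ≥0∞) * ((Fintype.card X : ℝ≥0∞))⁻¹ ^ n :=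
    measure_endsInf μ hμ
  set g : V → ℝ≥0∞ := fun v => μ {w | EndsInf E w v} with hg
  -- pointwise inequality
  have hL : ∀ u : V, (Fintype.card X : ℝ≥0∞) * g u
      ≤ ∑ v : V, ({x : X | E v x u}.ncard : ℝ≥0∞) * g v := by
    intro u
    have hrec : ∀ n, (Fintype.card X : ℝ≥0∞)
        * (((efin E (n + 1) u).card : ℝ≥0∞) * ((Fintype.card X : ℝ≥0∞))⁻¹ ^ (n + 1))
        ≤ ∑ v : V, ({x : X | E v x u}.ncard : ℝ≥0∞)
            * (((efin E n v).card : ℝ≥0∞) * ((Fintype.card X : ℝ≥0∞))⁻¹ ^ n) := by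
      intro n
      rw [← mul_assoc, mul_comm (Fintype.card X : ℝ≥0∞) _, mulCancel]
      calc ((efin E (n + 1) u).card : ℝ≥0∞) * ((Fintype.card X : ℝ≥0∞))⁻¹ ^ n
          ≤ ((∑ v : V, {x : X | E v x u}.ncard * (efin E n v).card : ℕ) : ℝ≥0∞)
            * ((Fintype.card X : ℝ≥0∞))⁻¹ ^ n :=
            mul_le_mul_left (Nat.cast_le.mpr (efin_succ_card_le n u)) _
        _ = _ := by
            rw [Nat.cast_sum, Finset.sum_mul]
            refine Finset.sum_congr rfl fun v _ => ?_
            rw [Nat.cast_mul, mul_assoc]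
    calc (Fintype.card X : ℝ≥0∞) * g u
        = ⨅ n, (Fintype.card X : ℝ≥0∞)
            * (((efin E (n + 1) u).card : ℝ≥0∞) * ((Fintype.card X : ℝ≥0∞))⁻¹ ^ (n + 1)) := by
          rw [hg]
          simp only
          rw [hμE u, iInf_shift (dE_antitone u),
            ENNReal.mul_iInf_of_ne kappa_ne_zero (ENNReal.natCast_ne_top _)]
      _ ≤ ⨅ n, ∑ v : V, ({x : X | E v x u}.ncard : ℝ≥0∞)
            * (((efin E n v).card : ℝ≥0∞) * ((Fintype.card X : ℝ≥0∞))⁻¹ ^ n) :=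
          le_iInf fun n => iInf_le_of_le n (hrec n)
      _ = ∑ v : V, ⨅ n, ({x : X | E v x u}.ncard : ℝ≥0∞)
            * (((efin E n v).card : ℝ≥0∞) * ((Fintype.card X : ℝ≥0∞))⁻¹ ^ n) :=
          iInf_finsum fun v => fun a b hab => mul_le_mul_right (dE_antitone v hab) _
      _ = ∑ v : V, ({x : X | E v x u}.ncard : ℝ≥0∞) * g v := by
          refine Finset.sum_congr rfl fun v _ => ?_
          rw [hg]
          simp only
          rw [hμE v, ENNReal.mul_iInf (fun h => absurd h (ENNReal.natCast_ne_top _))]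
  -- sum inequality the other way
  have hg1 : ∀ v : V, g v ≤ 1 := by
    intro v
    rw [hg]
    simp only
    rw [← measure_univ_eq_one μ hμ]
    exact measure_mono (Set.subset_univ _)
  have hsum : ∑ u : V, ∑ v : V, ({x : X | E v x u}.ncard : ℝ≥0∞) * g v
      ≤ ∑ u : V, (Fintype.card X : ℝ≥0∞) * g u := by
    rw [Finset.sum_comm]
    refine Finset.sum_le_sum fun v _ => ?_
    rw [← Finset.sum_mul]
    refine mul_le_mul_left ?_ _
    calc ∑ u : V, ({x : X | E v x u}.ncard : ℝ≥0∞)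
        = ((∑ u : V, {x : X | E v x u}.ncard : ℕ) : ℝ≥0∞) := by rw [Nat.cast_sum]
      _ ≤ (Fintype.card X : ℝ≥0∞) := Nat.cast_le.mpr (outdeg_le hrr v)
  -- cancellation
  have hfin : ∀ u : V, (Fintype.card X : ℝ≥0∞) * g u ≠ ∞ := fun u =>
    ENNReal.mul_ne_top (ENNReal.natCast_ne_top _) (ne_top_of_le_ne_top ENNReal.one_ne_top (hg1 u))
  have htot : ∑ u : V, ∑ v : V, ({x : X | E v x u}.ncard : ℝ≥0∞) * g v
      = ∑ u : V, (Fintype.card X : ℝ≥0∞) * g u :=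
    le_antisymm hsum (Finset.sum_le_sum fun u _ => hL u)
  classical
  refine le_antisymm (hL u) ?_
  have herase : (∑ v : V, ({x : X | E v x u}.ncard : ℝ≥0∞) * g v)
      + ∑ u' ∈ Finset.univ.erase u, (Fintype.card X : ℝ≥0∞) * g u'
      ≤ ((Fintype.card X : ℝ≥0∞) * g u)
      + ∑ u' ∈ Finset.univ.erase u, (Fintype.card X : ℝ≥0∞) * g u' := by
    calc (∑ v : V, ({x : X | E v x u}.ncard : ℝ≥0∞) * g v)
        + ∑ u' ∈ Finset.univ.erase u, (Fintype.card X : ℝ≥0∞) * g u'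
        ≤ (∑ v : V, ({x : X | E v x u}.ncard : ℝ≥0∞) * g v)
          + ∑ u' ∈ Finset.univ.erase u, ∑ v : V, ({x : X | E v x u'}.ncard : ℝ≥0∞) * g v :=
          add_le_add_right (Finset.sum_le_sum fun u' _ => hL u') _
      _ = ∑ u' : V, ∑ v : V, ({x : X | E v x u'}.ncard : ℝ≥0∞) * g v :=
          Finset.add_sum_erase _
            (fun u' => ∑ v : V, ({x : X | E v x u'}.ncard : ℝ≥0∞) * g v) (Finset.mem_univ u)
      _ = ∑ u' : V, (Fintype.card X : ℝ≥0∞) * g u' := htot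
      _ = _ := (Finset.add_sum_erase _
            (fun u' => (Fintype.card X : ℝ≥0∞) * g u') (Finset.mem_univ u)).symm
  have herfin : ∑ u' ∈ Finset.univ.erase u, (Fintype.card X : ℝ≥0∞) * g u' ≠ ∞ := by
    refine (ENNReal.sum_lt_top.mpr fun u' _ => ?_).ne
    exact lt_top_iff_ne_top.mpr (hfin u')
  exact (ENNReal.add_le_add_iff_right herfin).mp herase

end eigen

/-- For a finite right-resolving labeled graph with adjacency matrix `a_{vu}` and the uniform
Bernoulli measure: a nonzero vector `(μ(B_v))_v` is a right eigenvector of the adjacency matrix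
with eigenvalue `|X|`, and a nonzero vector `(μ(F_v))_v` is a left eigenvector with
eigenvalue `|X|`. -/
theorem stmt_8 {V X : Type*} [Fintype V] [Fintype X] [Nonempty X] [MeasurableSpace X]
    (E : V → X → V → Prop) (hrr : RightResolving E)
    (μ : Measure (ℕ → X))
    (hμ : ∀ u : List X, μ (Cyl u) = ((Fintype.card X : ℝ≥0∞))⁻¹ ^ u.length) :
    ((∃ v : V, μ {w | StartsInf E w v} ≠ 0) →
      ∀ v : V, (Fintype.card X : ℝ≥0∞) * μ {w | StartsInf E w v} =
        ∑ u : V, ({x : X | E v x u}.ncard : ℝ≥0∞) * μ {w | StartsInf E w u}) ∧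
    ((∃ v : V, μ {w | EndsInf E w v} ≠ 0) →
      ∀ u : V, (Fintype.card X : ℝ≥0∞) * μ {w | EndsInf E w u} =
        ∑ v : V, ({x : X | E v x u}.ncard : ℝ≥0∞) * μ {w | EndsInf E w v}) :=
  ⟨fun _ v => B_eigen μ hμ hrr v, fun _ u => F_eigen μ hμ hrr u⟩
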